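/- (Gagliardo–Nirenberg interpolation in 1D) For Λ ⊂ ℝ a bounded interval there is a constant C such that for every u ∈ H¹(Λ): ‖u‖⁶_{L⁶(Λ)} ≤ C ‖u‖²_{H¹(Λ)} ‖u‖⁴_{L²(Λ)}. -/

import Mathlib

open MeasureTheory intervalIntegral Set

/-- Gagliardo–Nirenberg interpolation in 1D: on a bounded interval `(a,b)` there is a
constant `C` such that `‖u‖⁶_{L⁶} ≤ C ‖u‖²_{H¹} ‖u‖⁴_{L²}` for every `u ∈ H¹`,
stated here for continuously differentiable functions. -/
theorem gagliardo_nirenberg_1d (a b : ℝ) (hab : a < b) :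
    ∃ C : ℝ, 0 < C ∧ ∀ u : ℝ → ℝ, ContDiffOn ℝ 1 u (Set.Icc a b) →
      (∫ x in a..b, |u x| ^ 6) ≤
        C * ((∫ x in a..b, (u x) ^ 2) + ∫ x in a..b, (derivWithin u (Set.Icc a b) x) ^ 2) *
          (∫ x in a..b, (u x) ^ 2) ^ 2 := by
  set d : ℝ := b - a with hdd
  have hd0 : 0 < d := sub_pos.mpr hab
  have hd2 : (0:ℝ) < d ^ 2 := by positivity
  refine ⟨2 / d ^ 2 + 8, by positivity, ?_⟩
  intro u hu
  set I := Set.Icc a b with hI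
  set u' := derivWithin u I with hu'def
  have hcu : ContinuousOn u I := hu.continuousOn
  have hcu' : ContinuousOn u' I :=
    hu.continuousOn_derivWithin (uniqueDiffOn_Icc hab) le_rfl
  have hint : ∀ f : ℝ → ℝ, ContinuousOn f I → IntervalIntegrable f volume a b := by
    intro f hf
    apply ContinuousOn.intervalIntegrable
    rwa [Set.uIcc_of_le hab.le]
  set L := ∫ x in a..b, (u x) ^ 2 with hL
  set K := ∫ x in a..b, (u' x) ^ 2 with hK
  have hL0 : 0 ≤ L := intervalIntegral.integral_nonneg hab.le (fun x _ => sq_nonneg _)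
  have hK0 : 0 ≤ K := intervalIntegral.integral_nonneg hab.le (fun x _ => sq_nonneg _)
  set S := ∫ x in a..b, |u x| * |u' x| with hS
  have hS0 : 0 ≤ S := intervalIntegral.integral_nonneg hab.le
    (fun x _ => mul_nonneg (abs_nonneg _) (abs_nonneg _))
  have hintS : IntervalIntegrable (fun x => |u x| * |u' x|) volume a b :=
    hint _ (hcu.abs.mul hcu'.abs)
  -- Cauchy–Schwarz : S ^ 2 ≤ L * K
  have hCS : S ^ 2 ≤ L * K := by
    have key : ∀ t : ℝ, 0 ≤ K * (t * t) + (2 * S) * t + L := by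
      intro t
      have e1 : (∫ x in a..b, ((u' x) ^ 2 * (t * t) + (2 * (|u x| * |u' x|)) * t + (u x) ^ 2))
          = K * (t * t) + (2 * S) * t + L := by
        rw [intervalIntegral.integral_add, intervalIntegral.integral_add]
        · rw [intervalIntegral.integral_mul_const, intervalIntegral.integral_mul_const,
            intervalIntegral.integral_const_mul]
          try ring
        · exact (hint _ ((hcu'.pow 2))).mul_const _
        · exact ((hintS.const_mul 2).mul_const t)
        · exact ((hint _ ((hcu'.pow 2))).mul_const _).add ((hintS.const_mul 2).mul_const t)
        · exact hint _ (hcu.pow 2)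
      rw [← e1]
      apply intervalIntegral.integral_nonneg hab.le
      intro x _
      nlinarith [sq_nonneg (|u x| + t * |u' x|), sq_abs (u x), sq_abs (u' x)]
    have hdisc := discrim_le_zero key
    rw [discrim] at hdisc
    nlinarith [hdisc]
  -- minimum point
  have hcusq : ContinuousOn (fun x => (u x) ^ 2) I := hcu.pow 2
  obtain ⟨y, hyI, hymin⟩ :=
    isCompact_Icc.exists_isMinOn (Set.nonempty_Icc.mpr hab.le) hcusq
  have hymin' : ∀ z ∈ I, (u y) ^ 2 ≤ (u z) ^ 2 := fun z hz => hymin hz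
  have havg : d * (u y) ^ 2 ≤ L := by
    have h := intervalIntegral.integral_mono_on hab.le intervalIntegrable_const
      (hint _ hcusq) (fun x hx => hymin' x hx)
    simpa [intervalIntegral.integral_const, smul_eq_mul, mul_comm] using h
  -- FTC bound
  have hg'int : IntervalIntegrable (fun t => 2 * u t * u' t) volume a b :=
    hint _ ((continuousOn_const.mul hcu).mul hcu')
  have habs2 : ∀ c e : ℝ, c ∈ I → e ∈ I → c ≤ e → |(u e) ^ 2 - (u c) ^ 2| ≤ 2 * S := by
    intro c e hcI heI hce
    have hsub : Set.Icc c e ⊆ I := Set.Icc_subset_Icc hcI.1 heI.2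
    have hintce : IntervalIntegrable (fun t => 2 * u t * u' t) volume c e := by
      apply hg'int.mono_set
      rw [Set.uIcc_of_le hce, Set.uIcc_of_le hab.le]
      exact hsub
    have heq : (∫ t in c..e, 2 * u t * u' t) = (u e) ^ 2 - (u c) ^ 2 := by
      apply intervalIntegral.integral_eq_sub_of_hasDerivAt_of_le hce (hcusq.mono hsub)
        ?_ hintce
      intro t ht
      have htI : t ∈ I := hsub (Set.mem_Icc.mpr ⟨ht.1.le, ht.2.le⟩)
      have h1 : HasDerivWithinAt u (u' t) I t :=
        ((hu.differentiableOn one_ne_zero) t htI).hasDerivWithinAt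
      have h2 : HasDerivAt u (u' t) t :=
        h1.hasDerivAt (Icc_mem_nhds (lt_of_le_of_lt hcI.1 ht.1) (lt_of_lt_of_le ht.2 heI.2))
      have h3 := h2.fun_pow 2
      simpa using h3
    have h4 : |∫ t in c..e, 2 * u t * u' t| ≤ ∫ t in c..e, |2 * u t * u' t| :=
      intervalIntegral.abs_integral_le_integral_abs hce
    have h5 : (∫ t in c..e, |2 * u t * u' t|) ≤ ∫ t in a..b, |2 * u t * u' t| := by
      apply intervalIntegral.integral_mono_interval hcI.1 hce heI.2
      · filter_upwards with x using abs_nonneg _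
      · exact hg'int.abs
    have h6 : (∫ t in a..b, |2 * u t * u' t|) = 2 * S := by
      rw [hS, ← intervalIntegral.integral_const_mul]
      apply intervalIntegral.integral_congr
      intro x _
      show |2 * u x * u' x| = 2 * (|u x| * |u' x|)
      rw [abs_mul, abs_mul, abs_two, mul_assoc]
    rw [← heq]
    calc |∫ t in c..e, 2 * u t * u' t| ≤ _ := h4
      _ ≤ _ := h5
      _ = 2 * S := h6
  have hbound : ∀ x ∈ I, (u x) ^ 2 ≤ (u y) ^ 2 + 2 * S := by
    intro x hxI
    rcases le_total x y with h | h
    · have := habs2 x y hxI hyI h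
      have := abs_le.mp this
      linarith [this.2, this.1]
    · have := habs2 y x hyI hxI h
      have := abs_le.mp this
      linarith [this.2, this.1]
  -- the sup bound B
  set B := L / d + 2 * S with hB
  have hB0 : 0 ≤ B := by positivity
  have hBbound : ∀ x ∈ I, (u x) ^ 2 ≤ B := by
    intro x hx
    have h1 := hbound x hx
    have h2 : (u y) ^ 2 ≤ L / d := by
      rw [le_div_iff₀ hd0]; linarith [havg]
    rw [hB]; linarith
  -- ∫ |u|^6 ≤ B^2 * L
  have h6 : (∫ x in a..b, |u x| ^ 6) ≤ B ^ 2 * L := by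
    have hmono : (∫ x in a..b, |u x| ^ 6) ≤ ∫ x in a..b, B ^ 2 * (u x) ^ 2 := by
      apply intervalIntegral.integral_mono_on hab.le (hint _ (hcu.abs.pow 6))
        ((hint _ hcusq).const_mul _)
      intro x hx
      have h1 := hBbound x hx
      have h2 : (0:ℝ) ≤ (u x) ^ 2 := sq_nonneg _
      have h3 : |u x| ^ 6 = ((u x) ^ 2) ^ 3 := by
        rw [show (6:ℕ) = 2 * 3 from rfl, pow_mul, sq_abs]
      show |u x| ^ 6 ≤ B ^ 2 * (u x) ^ 2
      rw [h3]
      nlinarith [mul_le_mul_of_nonneg_right (mul_le_mul h1 h1 h2 hB0) h2]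
    rw [intervalIntegral.integral_const_mul] at hmono
    exact hmono
  -- combine
  have hBd : B * d = L + 2 * S * d := by
    rw [hB]; field_simp
  have h1 : B ^ 2 * d ^ 2 ≤ 2 * L ^ 2 + 8 * L * K * d ^ 2 := by
    have hq : B ^ 2 * d ^ 2 = (L + 2 * S * d) ^ 2 := by
      rw [← hBd]; ring
    rw [hq]
    nlinarith [sq_nonneg (L - 2 * S * d), hCS, mul_nonneg (mul_nonneg hL0 hK0) hd2.le]
  have hgoal : B ^ 2 * L ≤ (2 / d ^ 2 + 8) * (L + K) * L ^ 2 := by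
    rw [← mul_le_mul_iff_of_pos_right hd2]
    have hc2 : (2 / d ^ 2) * d ^ 2 = 2 := by field_simp
    have expand : (2 / d ^ 2 + 8) * (L + K) * L ^ 2 * d ^ 2
        = (2 + 8 * d ^ 2) * (L + K) * L ^ 2 := by
      field_simp; try ring
    rw [expand]
    nlinarith [mul_le_mul_of_nonneg_right h1 hL0, mul_nonneg (mul_nonneg hL0 hL0) hK0,
      mul_nonneg (mul_nonneg (mul_nonneg hL0 hL0) hL0) hd2.le,
      mul_nonneg (mul_nonneg (mul_nonneg hL0 hL0) hK0) hd2.le]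
  calc (∫ x in a..b, |u x| ^ 6) ≤ B ^ 2 * L := h6
    _ ≤ (2 / d ^ 2 + 8) * (L + K) * L ^ 2 := hgoal
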